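/- Let C ⊆ F₄ⁿ be an F₄-linear code of dimension k with generator matrix G (a k × n matrix over F₄ of rank k whose rows span C). If the F₄-rank of G G† equals e, then the trace radical satisfies dim_{F₂}(C ∩ C^{⊥t}) = 2(k − e); that is, C, viewed as an (n, 2^{2k}) additive code, is of type (2k, e)_{[t]}. -/

import Mathlib

noncomputable section
open Matrix

abbrev F2 : Type := ZMod 2
abbrev F4 : Type := GaloisField 2 2

/-- The trace inner product `(u, v)ₜ = Σⱼ (uⱼ vⱼ² + uⱼ² vⱼ)` on `F₄ⁿ`. -/
def trInner {n : ℕ} (u v : Fin n → F4) : F4 :=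
  ∑ j, (u j * (v j) ^ 2 + (u j) ^ 2 * v j)

/-- The trace dual `C^{⊥t} = {u ∈ F₄ⁿ | ∀ v ∈ C, (u, v)ₜ = 0}` of a set `C ⊆ F₄ⁿ`,
as an `F₂`-subspace of `F₄ⁿ`. -/
def trDualSub {n : ℕ} (C : Set (Fin n → F4)) : Submodule F2 (Fin n → F4) where
  carrier := {u | ∀ v ∈ C, trInner u v = 0}
  zero_mem' := by intro v hv; simp [trInner]
  add_mem' := by
    intro a b ha hb v hv
    have h : trInner (a + b) v = trInner a v + trInner b v := by
      simp only [trInner, Pi.add_apply]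
      rw [← Finset.sum_add_distrib]
      refine Finset.sum_congr rfl ?_
      intro j _
      have h2 : (2 : F4) = 0 := CharTwo.two_eq_zero
      linear_combination (a j * b j * v j) * h2
    rw [h, ha v hv, hb v hv, add_zero]
  smul_mem' := by
    intro c a ha v hv
    have hc : (algebraMap F2 F4 c) ^ 2 = algebraMap F2 F4 c := by
      have h2 : c ^ 2 = c := by revert c; decide
      rw [← map_pow, h2]
    have h : trInner (c • a) v = algebraMap F2 F4 c * trInner a v := by
      simp only [trInner, Pi.smul_apply, Algebra.smul_def, Finset.mul_sum]
      refine Finset.sum_congr rfl ?_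
      intro j _
      rw [mul_pow, hc]; ring
    rw [h, ha v hv, mul_zero]

/-- Entrywise conjugate transpose `G† = (Ḡ)ᵀ` of a matrix over `F₄` (conjugation is `x ↦ x²`). -/
def conjT {k n : ℕ} (G : Matrix (Fin k) (Fin n) F4) : Matrix (Fin n) (Fin k) F4 :=
  Matrix.transpose (G.map fun x => x ^ 2)

/- ### Auxiliary material -/

noncomputable instance : Fintype F4 := Fintype.ofFinite F4
noncomputable instance : Fintype F4ˣ := Fintype.ofFinite _

lemma F4card : Fintype.card F4 = 4 := by
  rw [← Nat.card_eq_fintype_card, GaloisField.card 2 2 (by norm_num)]; norm_num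

lemma F4two : (2 : F4) = 0 := CharTwo.two_eq_zero

lemma F4pow4 (x : F4) : x ^ 4 = x := by
  have h := FiniteField.pow_card x; rwa [F4card] at h

lemma sum_sq {ι : Type} (s : Finset ι) (f : ι → F4) :
    (∑ j ∈ s, f j) ^ 2 = ∑ j ∈ s, (f j) ^ 2 := by
  have h := map_sum (frobenius F4 2) f s
  simp only [frobenius_def] at h
  exact h

lemma exists_omega : ∃ w : F4, w + w ^ 2 = 1 := by
  have hcu : Fintype.card F4ˣ = 3 := by
    rw [Fintype.card_eq_nat_card, Nat.card_units, Nat.card_eq_fintype_card, F4card]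
  obtain ⟨u, hu⟩ := Fintype.exists_ne_of_one_lt_card (by rw [hcu]; norm_num) (1 : F4ˣ)
  have h3 : u ^ 3 = 1 := by rw [← hcu]; exact pow_card_eq_one
  have h3' : (u : F4) ^ 3 = 1 := by
    have := congrArg Units.val h3; push_cast at this; exact this
  have hne : (u : F4) ≠ 1 := fun h => hu (Units.ext h)
  have hz : ((u : F4) - 1) * ((u : F4) ^ 2 + (u : F4) + 1) = 0 := by linear_combination h3'
  rcases mul_eq_zero.mp hz with h | h
  · exact absurd (by linear_combination h) hne
  · exact ⟨u, by linear_combination h - F4two⟩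

/-- The hermitian form `h(u,v) = Σⱼ uⱼ vⱼ²`. -/
def herm {n : ℕ} (u v : Fin n → F4) : F4 := ∑ j, u j * (v j) ^ 2

lemma herm_add_right {n : ℕ} (u a b : Fin n → F4) :
    herm u (a + b) = herm u a + herm u b := by
  simp only [herm, Pi.add_apply]
  rw [← Finset.sum_add_distrib]
  refine Finset.sum_congr rfl fun j _ => ?_
  linear_combination (u j * a j * b j) * F4two

lemma herm_smul_right {n : ℕ} (u v : Fin n → F4) (c : F4) :
    herm u (c • v) = c ^ 2 * herm u v := by
  simp only [herm, Pi.smul_apply, smul_eq_mul, Finset.mul_sum]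
  exact Finset.sum_congr rfl fun j _ => by ring

lemma trInner_eq_herm {n : ℕ} (u v : Fin n → F4) :
    trInner u v = herm u v + (herm u v) ^ 2 := by
  rw [trInner, herm, sum_sq, ← Finset.sum_add_distrib]
  refine Finset.sum_congr rfl fun j _ => ?_
  have h4 := F4pow4 (v j)
  linear_combination -(u j) ^ 2 * h4

/-- The right annihilator of `u` under the hermitian form, as an `F₄`-subspace. -/
def hermAnn {n : ℕ} (u : Fin n → F4) : Submodule F4 (Fin n → F4) where
  carrier := {v | herm u v = 0}
  zero_mem' := by simp [herm]
  add_mem' := by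
    intro a b ha hb
    have h := herm_add_right u a b
    simp only [Set.mem_setOf_eq] at *
    rw [h, ha, hb, add_zero]
  smul_mem' := by
    intro c a ha
    simp only [Set.mem_setOf_eq] at *
    rw [herm_smul_right, ha, mul_zero]

/-- if an `F₄`-linear code `C ⊆ F₄ⁿ` of dimension `k` has a generator matrix `G`
(of rank `k`, whose rows span `C`) with `rank(G G†) = e`, then the trace radical satisfies
`dim_{F₂}(C ∩ C^{⊥t}) = 2(k - e)`, i.e. `C` is an additive code of type `(2k, e)_{[t]}`. -/
theorem stmt7 (n k e : ℕ) (C : Submodule F4 (Fin n → F4)) (hk : Module.finrank F4 C = k)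
    (G : Matrix (Fin k) (Fin n) F4)
    (hspan : C = Submodule.span F4 (Set.range fun i => G i))
    (hrank : G.rank = k)
    (he : (G * conjT G).rank = e) :
    Module.finrank F2
      ↥(C.restrictScalars F2 ⊓ trDualSub (C : Set (Fin n → F4))) = 2 * (k - e) := by
  classical
  set M : Matrix (Fin k) (Fin k) F4 := G * conjT G with hM
  set L : (Fin k → F4) →ₗ[F4] (Fin n → F4) := Matrix.mulVecLin Gᵀ with hL
  have hrange : LinearMap.range L = C := by
    rw [hspan, hL, Matrix.range_mulVecLin]; rfl
  have hfinfun : Module.finrank F4 (Fin k → F4) = k := Module.finrank_fin_fun F4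
  -- L is injective
  have hinj : Function.Injective L := by
    rw [← LinearMap.ker_eq_bot]
    have h := LinearMap.finrank_range_add_finrank_ker L
    rw [hrange, hk, hfinfun] at h
    have h0 : Module.finrank F4 (LinearMap.ker L) = 0 := by omega
    exact Submodule.finrank_eq_zero.mp h0
  -- the kernel of x ↦ Mᵀ.mulVec x
  set K : Submodule F4 (Fin k → F4) := LinearMap.ker (Matrix.mulVecLin Mᵀ) with hK
  have hKdim : Module.finrank F4 K = k - e := by
    have h := LinearMap.finrank_range_add_finrank_ker (Matrix.mulVecLin Mᵀ)
    have hr : Module.finrank F4 (LinearMap.range (Matrix.mulVecLin Mᵀ)) = e := by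
      have : Mᵀ.rank = Module.finrank F4 (LinearMap.range (Matrix.mulVecLin Mᵀ)) := rfl
      rw [← this, Matrix.rank_transpose]; exact he
    rw [hr, hfinfun] at h
    rw [hK]
    omega
  set D : Submodule F4 (Fin n → F4) := K.map L with hD
  have hDdim : Module.finrank F4 D = k - e := by
    rw [hD, ← hKdim]
    exact (Submodule.equivMapOfInjective L hinj K).finrank_eq.symm
  -- coordinate identity
  have hcoord : ∀ (x : Fin k → F4) (i : Fin k),
      herm (Matrix.mulVec Gᵀ x) (G i) = Matrix.mulVec Mᵀ x i := by
    intro x i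
    simp only [herm, Matrix.mulVec, dotProduct, hM, Matrix.transpose_apply,
      Matrix.mul_apply, conjT, Matrix.map_apply, Finset.sum_mul, Finset.mul_sum]
    rw [Finset.sum_comm]
    exact Finset.sum_congr rfl fun j _ => Finset.sum_congr rfl fun l _ => by ring
  obtain ⟨w, hw⟩ := exists_omega
  -- the key submodule identity
  have key : C.restrictScalars F2 ⊓ trDualSub (C : Set (Fin n → F4))
      = D.restrictScalars F2 := by
    ext u
    simp only [Submodule.mem_inf, Submodule.restrictScalars_mem]
    constructor
    · rintro ⟨huC, hdual⟩
      have hdual' : ∀ v ∈ C, trInner u v = 0 := hdual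
      have hherm : ∀ v ∈ C, herm u v = 0 := by
        intro v hv
        have t1 := hdual' v hv
        have t2 := hdual' (w • v) (C.smul_mem w hv)
        rw [trInner_eq_herm] at t1 t2
        rw [herm_smul_right] at t2
        set H := herm u v with hH
        have hw4 : w ^ 4 = w := F4pow4 w
        linear_combination w * t1 + t2 - H ^ 2 * hw4 - w * H ^ 2 * F4two - H * hw
      rw [← hrange] at huC
      obtain ⟨x, hx⟩ := huC
      have hx' : Matrix.mulVec Gᵀ x = u := hx
      have hker : x ∈ K := by
        rw [hK, LinearMap.mem_ker]
        show Matrix.mulVec Mᵀ x = 0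
        funext i
        have hGi : G i ∈ C := by
          rw [hspan]; exact Submodule.subset_span ⟨i, rfl⟩
        have h0 := hherm (G i) hGi
        rw [← hx', hcoord x i] at h0
        simpa using h0
      exact Submodule.mem_map.mpr ⟨x, hker, hx⟩
    · rintro ⟨x, hxK, hx⟩
      have hx' : Matrix.mulVec Gᵀ x = u := hx
      have huC : u ∈ C := by rw [← hrange]; exact ⟨x, hx⟩
      refine ⟨huC, ?_⟩
      intro v hv
      have hherm : herm u v = 0 := by
        have hsub : C ≤ hermAnn u := by
          rw [hspan, Submodule.span_le]
          rintro _ ⟨i, rfl⟩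
          show herm u (G i) = 0
          have hzero : Matrix.mulVec Mᵀ x = 0 := hxK
          have h0 := hcoord x i
          rw [hx', hzero] at h0
          simpa using h0
        exact hsub hv
      rw [trInner_eq_herm, hherm]
      simp
  rw [key]
  have h1 : Module.finrank F2 ↥(D.restrictScalars F2) = Module.finrank F2 ↥D :=
    (LinearEquiv.restrictScalars F2 (Submodule.restrictScalarsEquiv F2 F4 _ D)).finrank_eq
  have h2 : Module.finrank F2 F4 * Module.finrank F4 ↥D = Module.finrank F2 ↥D :=
    Module.finrank_mul_finrank F2 F4 ↥D
  have h3 : Module.finrank F2 F4 = 2 := GaloisField.finrank 2 (by norm_num)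
  rw [h1, ← h2, h3, hDdim]

end
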